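/- arXiv:2502.18159 — 2 statements merged into one kernel-verified Lean document; each statement's English description precedes it below -/
import Mathlib

section
/- With U^{(n)} = Σ_{i=1}^n T_i and τ^{(n)} = Σ_{i=κ_n+1}^n T_i as above, E[U^{(n)} − τ^{(n)}] = 2(n − H_{n,1})/(n − 1). -/
open MeasureTheory ProbabilityTheory Finset Real Set

lemma exp_pdf_mul (r : ℝ) (hr : 0 < r) (x : ℝ) :
    ProbabilityTheory.gammaPDFReal 1 r x * x =
      Set.indicator (Set.Ici (0:ℝ)) (fun x => r * Real.exp (-(r*x)) * x) x := by
  simp only [ProbabilityTheory.gammaPDFReal, Set.indicator, Set.mem_Ici]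
  by_cases h : 0 ≤ x
  · simp [h, Real.Gamma_one, Real.rpow_one, Real.rpow_zero]
  · simp [h, not_le.mp h]

lemma exp_integrable_aux (r : ℝ) (hr : 0 < r) :
    Integrable (fun x => ProbabilityTheory.gammaPDFReal 1 r x * x) volume := by
  have h : IntegrableOn (fun x : ℝ => r * Real.exp (-(r*x)) * x) (Set.Ioi 0) volume := by
    have h0 := (integrableOn_rpow_mul_exp_neg_mul_rpow (p := 1) (s := 1) (by norm_num) (by norm_num) hr).const_mul r
    refine (integrableOn_congr_fun (fun x hx => ?_) measurableSet_Ioi).mp h0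
    simp [Real.rpow_one]; ring
  have h2 : IntegrableOn (fun x : ℝ => r * Real.exp (-(r*x)) * x) (Set.Ici 0) volume := by
    rwa [integrableOn_Ici_iff_integrableOn_Ioi]
  have h3 := h2.integrable_indicator measurableSet_Ici
  exact h3.congr (ae_of_all _ fun x => (exp_pdf_mul r hr x).symm)

lemma exp_integral_aux (r : ℝ) (hr : 0 < r) :
    ∫ x, ProbabilityTheory.gammaPDFReal 1 r x * x = 1 / r := by
  have h0 : ∫ x, ProbabilityTheory.gammaPDFReal 1 r x * x =
      ∫ x in Set.Ioi (0:ℝ), r * Real.exp (-(r*x)) * x := by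
    rw [integral_congr_ae (ae_of_all _ (exp_pdf_mul r hr)),
      integral_indicator measurableSet_Ici, ← integral_Ici_eq_integral_Ioi]
  rw [h0]
  have h1 : ∫ x in Set.Ioi (0:ℝ), r * Real.exp (-(r*x)) * x
      = r * ∫ x in Set.Ioi (0:ℝ), x ^ ((2:ℝ)-1) * Real.exp (-(r*x)) := by
    rw [← integral_const_mul]
    refine setIntegral_congr_fun measurableSet_Ioi (fun x hx => ?_)
    norm_num [Real.rpow_one]; ring
  rw [h1, integral_rpow_mul_exp_neg_mul_Ioi (by norm_num) hr]
  rw [Real.Gamma_two]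
  rw [show ((2:ℝ) = ((2:ℕ):ℝ)) by norm_num, Real.rpow_natCast]
  field_simp

lemma exp_pdf_meas (r : ℝ) : Measurable (fun x => (ProbabilityTheory.gammaPDFReal 1 r x).toNNReal) :=
  measurable_real_toNNReal.comp (ProbabilityTheory.measurable_gammaPDFReal 1 r)

lemma exp_measure_eq (r : ℝ) : ProbabilityTheory.expMeasure r =
    volume.withDensity (fun x => ((ProbabilityTheory.gammaPDFReal 1 r x).toNNReal : ENNReal)) := rfl

lemma exp_smul_eq (r : ℝ) (hr : 0 < r) (x : ℝ) :
    (ProbabilityTheory.gammaPDFReal 1 r x).toNNReal • x = ProbabilityTheory.gammaPDFReal 1 r x * x := by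
  rw [NNReal.smul_def, smul_eq_mul, Real.coe_toNNReal _ (ProbabilityTheory.gammaPDFReal_nonneg one_pos hr x)]

lemma exp_integrable (r : ℝ) (hr : 0 < r) : Integrable id (ProbabilityTheory.expMeasure r) := by
  rw [exp_measure_eq, integrable_withDensity_iff_integrable_smul (exp_pdf_meas r)]
  exact (exp_integrable_aux r hr).congr (ae_of_all _ fun x => (exp_smul_eq r hr x).symm)

lemma exp_mean (r : ℝ) (hr : 0 < r) : ∫ x, x ∂(ProbabilityTheory.expMeasure r) = 1 / r := by
  rw [exp_measure_eq, integral_withDensity_eq_integral_smul (exp_pdf_meas r) (fun x => x)]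
  rw [integral_congr_ae (ae_of_all _ (exp_smul_eq r hr))]
  exact exp_integral_aux r hr

lemma key_S (m : ℕ) :
    ∑ k ∈ Finset.Icc 1 m, (1/(((k:ℝ)+1)*((k:ℝ)+2))) * (∑ i ∈ Finset.Icc 1 k, (1:ℝ)/i)
      = 1 - ((∑ i ∈ Finset.Icc 1 (m+1), (1:ℝ)/i) + 1)/((m:ℝ)+2) := by
  induction m with
  | zero => norm_num
  | succ m ih =>
      rw [Finset.sum_Icc_succ_top (Nat.one_le_iff_ne_zero.mpr (Nat.succ_ne_zero m)), ih]
      rw [Finset.sum_Icc_succ_top (by omega : 1 ≤ m + 1 + 1)]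
      have hm2 : ((m:ℝ)+2) ≠ 0 := by positivity
      have hm3 : ((m:ℝ)+3) ≠ 0 := by positivity
      push_cast
      rw [Finset.sum_Icc_succ_top (by omega : 1 ≤ m + 1)]
      push_cast
      field_simp
      ring

lemma key_sum (n : ℕ) (hn : 2 ≤ n) :
    ∑ k ∈ Finset.Icc 1 (n-1),
        (2*((n:ℝ)+1)/((n:ℝ)-1) * (1/(((k:ℝ)+1)*((k:ℝ)+2)))) * (∑ i ∈ Finset.Icc 1 k, (1:ℝ)/i)
      = 2 * ((n:ℝ) - ∑ i ∈ Finset.Icc 1 n, (1:ℝ)/i) / ((n:ℝ)-1) := by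
  obtain ⟨m, rfl⟩ : ∃ m, n = m + 2 := ⟨n - 2, by omega⟩
  have h1 : (m + 2) - 1 = m + 1 := by omega
  rw [h1]
  have hfac : ∀ k ∈ Finset.Icc 1 (m+1),
      (2*(((m+2:ℕ):ℝ)+1)/(((m+2:ℕ):ℝ)-1) * (1/(((k:ℝ)+1)*((k:ℝ)+2)))) * (∑ i ∈ Finset.Icc 1 k, (1:ℝ)/i)
      = (2*(((m+2:ℕ):ℝ)+1)/(((m+2:ℕ):ℝ)-1)) * ((1/(((k:ℝ)+1)*((k:ℝ)+2))) * (∑ i ∈ Finset.Icc 1 k, (1:ℝ)/i)) := by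
    intro k _; ring
  rw [Finset.sum_congr rfl hfac, ← Finset.mul_sum, key_S (m+1)]
  have h2 : (m + 1) + 1 = m + 2 := rfl
  rw [h2]
  set H : ℝ := ∑ i ∈ Finset.Icc 1 (m+2), (1:ℝ)/i with hH
  have hm1 : ((m:ℝ)+1) ≠ 0 := by positivity
  have hm3 : ((m:ℝ)+3) ≠ 0 := by positivity
  push_cast
  rw [show ((m:ℝ)+2-1) = (m:ℝ)+1 from by ring,
    show ((m:ℝ)+1+2) = (m:ℝ)+3 from by ring,
    div_mul_eq_mul_div, div_eq_div_iff hm1 hm1]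
  field_simp
  ring

theorem expectation_shared_path
    {Ω : Type*} [MeasurableSpace Ω] {P : Measure Ω} [IsProbabilityMeasure P]
    (n : ℕ) (hn : 2 ≤ n)
    (T : ℕ → Ω → ℝ) (κ : Ω → ℕ)
    (hTmeas : ∀ i, Measurable (T i)) (hκmeas : Measurable κ)
    (hTindep : iIndepFun T P)
    (hTdist : ∀ i ∈ Finset.Icc 1 n, P.map (T i) = expMeasure i)
    (hκrange : ∀ ω, κ ω ∈ Finset.Icc 1 (n - 1))
    (hκdist : ∀ k ∈ Finset.Icc 1 (n - 1),
      P {ω | κ ω = k} =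
        ENNReal.ofReal ((2 * ((n : ℝ) + 1) / ((n : ℝ) - 1)) *
          (1 / (((k : ℝ) + 1) * ((k : ℝ) + 2)))))
    (hindep : IndepFun κ (fun ω i => T i ω) P)
    (H1 H2 : ℝ)
    (hH1 : H1 = ∑ i ∈ Finset.Icc 1 n, (1 : ℝ) / i)
    (hH2 : H2 = ∑ i ∈ Finset.Icc 1 n, (1 : ℝ) / (i : ℝ) ^ 2) :
    ∫ ω, ((∑ i ∈ Finset.Icc 1 n, T i ω) - ∑ i ∈ Finset.Icc (κ ω + 1) n, T i ω) ∂P =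
      2 * ((n : ℝ) - H1) / ((n : ℝ) - 1) := by
  have hnR : (0:ℝ) < (n:ℝ) - 1 := by
    have : (2:ℝ) ≤ (n:ℝ) := by exact_mod_cast hn
    linarith
  have hTint : ∀ i ∈ Finset.Icc 1 n, Integrable (T i) P := by
    intro i hi
    have hipos : (0:ℝ) < (i:ℝ) := by
      have := (Finset.mem_Icc.mp hi).1; exact_mod_cast this
    have h := exp_integrable (i:ℝ) hipos
    rw [← hTdist i hi] at h
    exact (integrable_map_measure aestronglyMeasurable_id (hTmeas i).aemeasurable).mp h
  have hTmean : ∀ i ∈ Finset.Icc 1 n, ∫ ω, T i ω ∂P = 1 / (i:ℝ) := by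
    intro i hi
    have hipos : (0:ℝ) < (i:ℝ) := by
      have := (Finset.mem_Icc.mp hi).1; exact_mod_cast this
    calc ∫ ω, T i ω ∂P = ∫ x, x ∂(P.map (T i)) :=
          (integral_map (hTmeas i).aemeasurable aestronglyMeasurable_id).symm
      _ = 1 / (i:ℝ) := by rw [hTdist i hi]; exact exp_mean _ hipos
  have hsubset : ∀ k ∈ Finset.Icc 1 (n-1), ∀ i ∈ Finset.Icc 1 k, i ∈ Finset.Icc 1 n := by
    intro k hk i hi
    simp only [Finset.mem_Icc] at *
    omega
  have hYint : ∀ k ∈ Finset.Icc 1 (n-1),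
      Integrable (fun ω => ∑ i ∈ Finset.Icc 1 k, T i ω) P := fun k hk =>
    integrable_finset_sum _ (fun i hi => hTint i (hsubset k hk i hi))
  have hXmeas : ∀ k : ℕ, Measurable (fun ω => if κ ω = k then (1:ℝ) else 0) := fun k =>
    Measurable.ite (hκmeas (measurableSet_singleton k)) measurable_const measurable_const
  have hindep' : ∀ k : ℕ, IndepFun (fun ω => if κ ω = k then (1:ℝ) else 0)
      (fun ω => ∑ i ∈ Finset.Icc 1 k, T i ω) P := by
    intro k
    have hφ : Measurable (fun m : ℕ => if m = k then (1:ℝ) else 0) := measurable_from_top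
    have hψ : Measurable (fun v : ℕ → ℝ => ∑ i ∈ Finset.Icc 1 k, v i) :=
      Finset.measurable_sum _ (fun i _ => measurable_pi_apply i)
    exact hindep.comp hφ hψ
  have hXYint : ∀ k ∈ Finset.Icc 1 (n-1),
      Integrable (fun ω => (if κ ω = k then (1:ℝ) else 0) * ∑ i ∈ Finset.Icc 1 k, T i ω) P := by
    intro k hk
    refine (hYint k hk).bdd_mul (hXmeas k).aestronglyMeasurable (c := 1) (ae_of_all _ fun ω => ?_)
    by_cases h : κ ω = k <;> simp [h]
  have hpt : ∀ ω, (∑ i ∈ Finset.Icc 1 n, T i ω) - ∑ i ∈ Finset.Icc (κ ω + 1) n, T i ω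
      = ∑ k ∈ Finset.Icc 1 (n-1), (if κ ω = k then (1:ℝ) else 0) * ∑ i ∈ Finset.Icc 1 k, T i ω := by
    intro ω
    obtain ⟨h1k, h2k⟩ := Finset.mem_Icc.mp (hκrange ω)
    have hκn : κ ω ≤ n := le_trans h2k (Nat.sub_le n 1)
    have hsplit : (∑ i ∈ Finset.Ioc 0 (κ ω), T i ω) + ∑ i ∈ Finset.Ioc (κ ω) n, T i ω
        = ∑ i ∈ Finset.Ioc 0 n, T i ω :=
      Finset.sum_Ioc_consecutive _ (Nat.zero_le _) hκn
    have e1 : Finset.Icc 1 n = Finset.Ioc 0 n := Finset.Icc_add_one_left_eq_Ioc 0 n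
    have e2 : Finset.Icc (κ ω + 1) n = Finset.Ioc (κ ω) n := Finset.Icc_add_one_left_eq_Ioc _ n
    have e3 : Finset.Icc 1 (κ ω) = Finset.Ioc 0 (κ ω) := Finset.Icc_add_one_left_eq_Ioc 0 _
    have hRHS : ∑ k ∈ Finset.Icc 1 (n-1),
        (if κ ω = k then (1:ℝ) else 0) * ∑ i ∈ Finset.Icc 1 k, T i ω
        = ∑ i ∈ Finset.Icc 1 (κ ω), T i ω := by
      simp only [ite_mul, one_mul, zero_mul]
      rw [Finset.sum_ite_eq (Finset.Icc 1 (n-1)) (κ ω)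
        (fun k => ∑ i ∈ Finset.Icc 1 k, T i ω), if_pos (hκrange ω)]
    rw [hRHS, e1, e2, e3]
    linarith
  calc ∫ ω, ((∑ i ∈ Finset.Icc 1 n, T i ω) - ∑ i ∈ Finset.Icc (κ ω + 1) n, T i ω) ∂P
      = ∫ ω, ∑ k ∈ Finset.Icc 1 (n-1),
          (if κ ω = k then (1:ℝ) else 0) * ∑ i ∈ Finset.Icc 1 k, T i ω ∂P :=
        integral_congr_ae (ae_of_all _ hpt)
    _ = ∑ k ∈ Finset.Icc 1 (n-1), ∫ ω,
          (if κ ω = k then (1:ℝ) else 0) * ∑ i ∈ Finset.Icc 1 k, T i ω ∂P :=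
        integral_finset_sum _ hXYint
    _ = ∑ k ∈ Finset.Icc 1 (n-1),
          (2*((n:ℝ)+1)/((n:ℝ)-1) * (1/(((k:ℝ)+1)*((k:ℝ)+2)))) * ∑ i ∈ Finset.Icc 1 k, (1:ℝ)/i := by
        refine Finset.sum_congr rfl (fun k hk => ?_)
        have hmul := (hindep' k).integral_mul_eq_mul_integral (hXmeas k).aestronglyMeasurable
          (hYint k hk).aestronglyMeasurable
        rw [show (fun ω => (if κ ω = k then (1:ℝ) else 0) * ∑ i ∈ Finset.Icc 1 k, T i ω)
          = ((fun ω => if κ ω = k then (1:ℝ) else 0) * (fun ω => ∑ i ∈ Finset.Icc 1 k, T i ω))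
          from rfl, hmul]
        congr 1
        · have hind : (fun ω => if κ ω = k then (1:ℝ) else 0)
              = Set.indicator {ω | κ ω = k} (fun _ => (1:ℝ)) := by
            funext ω
            simp [Set.indicator_apply, Set.mem_setOf_eq]
          rw [hind, integral_indicator_const (1:ℝ)
            (show MeasurableSet {ω | κ ω = k} from hκmeas (measurableSet_singleton k)),
            measureReal_def, hκdist k hk, smul_eq_mul, mul_one, ENNReal.toReal_ofReal]
          exact mul_nonneg (div_nonneg (by positivity) hnR.le) (by positivity)
        · rw [integral_finset_sum _ (fun i hi => hTint i (hsubset k hk i hi))]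
          exact Finset.sum_congr rfl (fun i hi => hTmean i (hsubset k hk i hi))
    _ = 2 * ((n:ℝ) - ∑ i ∈ Finset.Icc 1 n, (1:ℝ)/i) / ((n:ℝ)-1) := key_sum n hn
    _ = 2 * ((n:ℝ) - H1) / ((n:ℝ)-1) := by rw [hH1]
end

section
/- With the Yule model setup, the cross-moment satisfies E[U^{(n)} τ^{(n)}] = ((n+1)/(n-1))(H_{n,1}^2 − H_{n,2}) − (2n/(n-1))(H_{n,1} − 1). -/
open MeasureTheory ProbabilityTheory Finset Real

section AuxExp
open scoped ENNReal NNReal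

lemma gammaPDFReal_one_eq (r x : ℝ) :
    gammaPDFReal 1 r x = Set.indicator (Set.Ici 0) (fun x => r * exp (-(r * x))) x := by
  rw [gammaPDFReal]
  simp only [Real.rpow_one, sub_self, Real.rpow_zero, Real.Gamma_one, Set.indicator_apply,
    Set.mem_Ici]
  split_ifs <;> ring

lemma integrableOn_pow_exp {r : ℝ} (hr : 0 < r) (p : ℕ) :
    IntegrableOn (fun x : ℝ => r * exp (-(r * x)) * x ^ p) (Set.Ici 0) volume := by
  rw [integrableOn_Ici_iff_integrableOn_Ioi]
  have h := integrableOn_rpow_mul_exp_neg_mul_rpow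
    (lt_of_lt_of_le (by norm_num) (Nat.cast_nonneg p) : (-1:ℝ) < p) (one_pos : (0:ℝ) < 1) hr
  refine (h.const_mul r).congr ?_
  refine (ae_restrict_iff' measurableSet_Ioi).mpr (ae_of_all _ fun x hx => ?_)
  simp only [Real.rpow_one, Real.rpow_natCast]
  ring

lemma exp_integrable_pow {r : ℝ} (hr : 0 < r) (p : ℕ) :
    Integrable (fun x => x ^ p) (expMeasure r) := by
  have hgm : Measurable (gammaPDF 1 r) := (measurable_gammaPDFReal 1 r).ennreal_ofReal
  rw [expMeasure, gammaMeasure,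
    integrable_withDensity_iff_integrable_smul' hgm
      (Filter.Eventually.of_forall fun x => ENNReal.ofReal_lt_top)]
  have : (fun x : ℝ => (gammaPDF 1 r x).toReal • x ^ p) =
      Set.indicator (Set.Ici 0) (fun x => r * exp (-(r * x)) * x ^ p) := by
    funext x
    rw [gammaPDF, ENNReal.toReal_ofReal (gammaPDFReal_nonneg one_pos hr x),
      gammaPDFReal_one_eq, smul_eq_mul]
    simp only [Set.indicator_apply]
    split_ifs <;> simp
  rw [this, integrable_indicator_iff measurableSet_Ici]
  exact integrableOn_pow_exp hr p

lemma exp_integral_pow {r : ℝ} (hr : 0 < r) (p : ℕ) :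
    ∫ x, x ^ p ∂(expMeasure r) = (Nat.factorial p : ℝ) / r ^ p := by
  have hd : expMeasure r
      = volume.withDensity (fun x => ((gammaPDFReal 1 r x).toNNReal : ℝ≥0∞)) := by
    rw [expMeasure, gammaMeasure]; rfl
  rw [hd, integral_withDensity_eq_integral_smul
    ((measurable_gammaPDFReal 1 r).real_toNNReal)]
  have heq : (fun x : ℝ => (gammaPDFReal 1 r x).toNNReal • x ^ p) =
      Set.indicator (Set.Ici 0) (fun x => r * exp (-(r * x)) * x ^ p) := by
    funext x
    rw [NNReal.smul_def, Real.coe_toNNReal _ (gammaPDFReal_nonneg one_pos hr x),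
      smul_eq_mul, gammaPDFReal_one_eq]
    simp only [Set.indicator_apply]
    split_ifs <;> simp
  rw [heq, integral_indicator measurableSet_Ici, integral_Ici_eq_integral_Ioi]
  have key := integral_rpow_mul_exp_neg_mul_Ioi (by positivity : (0:ℝ) < (p:ℝ) + 1) hr
  rw [add_sub_cancel_right] at key
  have hre : ∫ x in Set.Ioi (0:ℝ), r * exp (-(r * x)) * x ^ p
      = r * ∫ x in Set.Ioi (0:ℝ), x ^ ((p:ℝ)) * exp (-(r * x)) := by
    rw [← integral_const_mul]
    refine setIntegral_congr_fun measurableSet_Ioi (fun x hx => ?_)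
    rw [Real.rpow_natCast]; ring
  rw [hre, key]
  have hGamma : Real.Gamma ((p:ℝ) + 1) = (Nat.factorial p : ℝ) := Real.Gamma_nat_eq_factorial p
  have hpow : ((1:ℝ)/r) ^ ((p:ℝ) + 1) = (1/r) ^ (p+1) := by
    rw [← Real.rpow_natCast (1/r) (p+1)]; push_cast; ring_nf
  rw [hGamma, hpow]
  have : r ≠ 0 := hr.ne'
  field_simp
  rw [div_pow, one_pow, pow_succ, mul_one_div, div_mul_eq_mul_div, div_eq_one_iff_eq (by positivity)]; ring

end AuxExp

lemma sum_inv_mul_aux (j : ℕ) (hj : 1 ≤ j) :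
    ∑ k ∈ Icc 1 (j - 1), (1 : ℝ) / (((k : ℝ) + 1) * ((k : ℝ) + 2)) =
      ((j : ℝ) - 1) / (2 * ((j : ℝ) + 1)) := by
  induction j with
  | zero => omega
  | succ m ih =>
    rcases Nat.eq_or_lt_of_le hj with h | h
    · simp [← h]
    · have hm : 1 ≤ m := by omega
      have := ih hm
      rw [Nat.add_sub_cancel, ← Nat.sub_add_cancel hm,
        Finset.sum_Icc_succ_top (by omega : 1 ≤ m - 1 + 1), Nat.sub_add_cancel hm, this]
      have h1 : ((m : ℝ) + 1) ≠ 0 := by positivity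
      have h2 : ((m : ℝ) + 2) ≠ 0 := by positivity
      push_cast
      field_simp
      ring

lemma sumj_aux (c : ℝ) (n : ℕ) (hn : 1 ≤ n) :
    ∑ j ∈ Icc 2 n, ((j : ℝ) - 1) / (2 * ((j : ℝ) + 1)) * (c / (j : ℝ) + 1 / (j : ℝ) ^ 2) =
      (c * ((∑ i ∈ Icc 1 n, 1 / (i : ℝ)) + 2 / ((n : ℝ) + 1) - 2) +
        (2 - (∑ i ∈ Icc 1 n, 1 / (i : ℝ) ^ 2) - 2 / ((n : ℝ) + 1))) / 2 := by
  induction n with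
  | zero => omega
  | succ m ih =>
    rcases Nat.eq_or_lt_of_le hn with h | h
    · simp [← h]
      norm_num
    · have hm : 1 ≤ m := by omega
      rw [Finset.sum_Icc_succ_top (by omega : 2 ≤ m + 1),
        Finset.sum_Icc_succ_top (by omega : 1 ≤ m + 1),
        Finset.sum_Icc_succ_top (by omega : 1 ≤ m + 1), ih hm]
      have h1 : ((m : ℝ) + 1) ≠ 0 := by positivity
      have h2 : ((m : ℝ) + 2) ≠ 0 := by positivity
      push_cast
      field_simp
      ring

theorem cross_moment_height_coalescent
    {Ω : Type*} [MeasurableSpace Ω] {P : Measure Ω} [IsProbabilityMeasure P]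
    (n : ℕ) (hn : 2 ≤ n)
    (T : ℕ → Ω → ℝ) (κ : Ω → ℕ)
    (hTmeas : ∀ i, Measurable (T i)) (hκmeas : Measurable κ)
    (hTindep : iIndepFun T P)
    (hTdist : ∀ i ∈ Finset.Icc 1 n, P.map (T i) = expMeasure i)
    (hκrange : ∀ ω, κ ω ∈ Finset.Icc 1 (n - 1))
    (hκdist : ∀ k ∈ Finset.Icc 1 (n - 1),
      P {ω | κ ω = k} =
        ENNReal.ofReal ((2 * ((n : ℝ) + 1) / ((n : ℝ) - 1)) *
          (1 / (((k : ℝ) + 1) * ((k : ℝ) + 2)))))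
    (hindep : IndepFun κ (fun ω i => T i ω) P)
    (H1 H2 : ℝ)
    (hH1 : H1 = ∑ i ∈ Finset.Icc 1 n, (1 : ℝ) / i)
    (hH2 : H2 = ∑ i ∈ Finset.Icc 1 n, (1 : ℝ) / (i : ℝ) ^ 2) :
    ∫ ω, (∑ i ∈ Finset.Icc 1 n, T i ω) * (∑ i ∈ Finset.Icc (κ ω + 1) n, T i ω) ∂P =
      ((n : ℝ) + 1) / ((n : ℝ) - 1) * (H1 ^ 2 - H2) - 2 * (n : ℝ) / ((n : ℝ) - 1) * (H1 - 1) := by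
  have hn2 : (2:ℝ) ≤ (n:ℝ) := by exact_mod_cast hn
  -- moments
  have hmom : ∀ i ∈ Icc 1 n, ∀ p : ℕ,
      Integrable (fun ω => T i ω ^ p) P ∧
        ∫ ω, T i ω ^ p ∂P = (Nat.factorial p : ℝ) / (i:ℝ) ^ p := by
    intro i hi p
    have hipos : (0:ℝ) < i := by
      have : 1 ≤ i := (Finset.mem_Icc.mp hi).1
      exact_mod_cast Nat.lt_of_lt_of_le Nat.zero_lt_one this
    have hmap := hTdist i hi
    have hmeasp : Measurable (fun x : ℝ => x ^ p) := measurable_id.pow_const p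
    constructor
    · have h := exp_integrable_pow hipos p
      rw [← hmap] at h
      exact (integrable_map_measure hmeasp.aestronglyMeasurable
        (hTmeas i).aemeasurable).mp h
    · rw [show (fun ω => T i ω ^ p) = fun ω => (fun x : ℝ => x ^ p) (T i ω) from rfl,
        ← integral_map (hTmeas i).aemeasurable hmeasp.aestronglyMeasurable, hmap,
        exp_integral_pow hipos p]
  -- pairwise cross moments
  have hTT : ∀ i ∈ Icc 1 n, ∀ j ∈ Icc 1 n,
      Integrable (fun ω => T i ω * T j ω) P ∧
        ∫ ω, T i ω * T j ω ∂P =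
          (if i = j then 2 / (i:ℝ)^2 else 1/((i:ℝ)*(j:ℝ))) := by
    intro i hi j hj
    by_cases hij : i = j
    · subst hij
      have h2 := hmom i hi 2
      have hsq : (fun ω => T i ω * T i ω) = fun ω => T i ω ^ 2 :=
        funext fun ω => (sq (T i ω)).symm
      refine ⟨by rw [hsq]; exact h2.1, ?_⟩
      rw [hsq, h2.2, if_pos rfl]
      norm_num [Nat.factorial]
    · have hind := hTindep.indepFun hij
      have hi1 := hmom i hi 1
      have hj1 := hmom j hj 1
      have hii : Integrable (T i) P := by simpa using hi1.1
      have hjj : Integrable (T j) P := by simpa using hj1.1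
      refine ⟨hind.integrable_mul hii hjj, ?_⟩
      have h := hind.integral_mul_eq_mul_integral hii.aestronglyMeasurable hjj.aestronglyMeasurable
      have hTi : ∫ ω, T i ω ∂P = 1 / (i:ℝ) := by simpa [Nat.factorial] using hi1.2
      have hTj : ∫ ω, T j ω ∂P = 1 / (j:ℝ) := by simpa [Nat.factorial] using hj1.2
      rw [show (fun ω => T i ω * T j ω) = T i * T j from rfl, h, hTi, hTj, if_neg hij]
      ring
  -- integrability of the product of sums
  have hsub : ∀ k : ℕ, ∀ j ∈ Icc (k+1) n, j ∈ Icc 1 n := by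
    intro k j hj
    rw [Finset.mem_Icc] at hj ⊢
    omega
  have hUSexp : ∀ k : ℕ, (fun ω => (∑ i ∈ Icc 1 n, T i ω) * (∑ j ∈ Icc (k+1) n, T j ω))
      = fun ω => ∑ i ∈ Icc 1 n, ∑ j ∈ Icc (k+1) n, T i ω * T j ω :=
    fun k => funext fun ω => Finset.sum_mul_sum _ _ _ _
  have hUSint : ∀ k : ℕ,
      Integrable (fun ω => (∑ i ∈ Icc 1 n, T i ω) * (∑ j ∈ Icc (k+1) n, T j ω)) P := by
    intro k
    rw [hUSexp k]
    exact integrable_finset_sum _ fun i hi => integrable_finset_sum _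
      fun j hj => (hTT i hi j (hsub k j hj)).1
  -- value of the product of sums
  have hUSval : ∀ k : ℕ,
      ∫ ω, (∑ i ∈ Icc 1 n, T i ω) * (∑ j ∈ Icc (k+1) n, T j ω) ∂P
        = ∑ j ∈ Icc (k+1) n, (H1 / (j:ℝ) + 1/(j:ℝ)^2) := by
    intro k
    rw [hUSexp k, integral_finset_sum _ (fun i hi => integrable_finset_sum _
      fun j hj => (hTT i hi j (hsub k j hj)).1)]
    have : ∀ i ∈ Icc 1 n, ∫ ω, ∑ j ∈ Icc (k+1) n, T i ω * T j ω ∂P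
        = ∑ j ∈ Icc (k+1) n, (if i = j then 2 / (i:ℝ)^2 else 1/((i:ℝ)*(j:ℝ))) := by
      intro i hi
      rw [integral_finset_sum _ (fun j hj => (hTT i hi j (hsub k j hj)).1)]
      exact Finset.sum_congr rfl fun j hj => (hTT i hi j (hsub k j hj)).2
    rw [Finset.sum_congr rfl this, Finset.sum_comm]
    refine Finset.sum_congr rfl fun j hj => ?_
    have hjmem : j ∈ Icc 1 n := hsub k j hj
    have hjpos : (0:ℝ) < j := by
      have : 1 ≤ j := (Finset.mem_Icc.mp hjmem).1
      exact_mod_cast Nat.lt_of_lt_of_le Nat.zero_lt_one this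
    have hje : ∀ i : ℕ, (if i = j then 2 / (i:ℝ)^2 else 1/((i:ℝ)*(j:ℝ)))
        = 1/((i:ℝ)*(j:ℝ)) + (if i = j then 1/(j:ℝ)^2 else 0) := by
      intro i
      by_cases h : i = j
      · subst h
        rw [if_pos rfl, if_pos rfl, sq]
        field_simp
        norm_num
      · rw [if_neg h, if_neg h, add_zero]
    rw [Finset.sum_congr rfl fun i _ => hje i, Finset.sum_add_distrib,
      Finset.sum_ite_eq' (Icc 1 n) j (fun _ => 1/(j:ℝ)^2), if_pos hjmem]
    have : ∑ i ∈ Icc 1 n, 1/((i:ℝ)*(j:ℝ)) = H1 / (j:ℝ) := by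
      rw [hH1, Finset.sum_div]
      exact Finset.sum_congr rfl fun i _ => by rw [div_div]
    rw [this]
  -- decomposition over the values of κ
  have hsets : ∀ k : ℕ, MeasurableSet {ω | κ ω = k} := fun k =>
    hκmeas (measurableSet_singleton k)
  have hindterm : ∀ k : ℕ, (fun ω => (if κ ω = k then (1:ℝ) else 0) *
      ((∑ i ∈ Icc 1 n, T i ω) * (∑ j ∈ Icc (k+1) n, T j ω)))
      = Set.indicator {ω | κ ω = k}
          (fun ω => (∑ i ∈ Icc 1 n, T i ω) * (∑ j ∈ Icc (k+1) n, T j ω)) := by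
    intro k
    funext ω
    by_cases h : κ ω = k <;>
      simp [h, Set.indicator_apply, Set.mem_setOf_eq]
  have htermint : ∀ k : ℕ, Integrable (fun ω => (if κ ω = k then (1:ℝ) else 0) *
      ((∑ i ∈ Icc 1 n, T i ω) * (∑ j ∈ Icc (k+1) n, T j ω))) P := by
    intro k
    rw [hindterm k]
    exact (hUSint k).indicator (hsets k)
  have hpt : (fun ω => (∑ i ∈ Icc 1 n, T i ω) * (∑ i ∈ Icc (κ ω + 1) n, T i ω))
      = fun ω => ∑ k ∈ Icc 1 (n-1), (if κ ω = k then (1:ℝ) else 0) *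
          ((∑ i ∈ Icc 1 n, T i ω) * (∑ j ∈ Icc (k+1) n, T j ω)) := by
    funext ω
    have h1 : ∀ k ∈ Icc 1 (n-1), (if κ ω = k then (1:ℝ) else 0) *
        ((∑ i ∈ Icc 1 n, T i ω) * (∑ j ∈ Icc (k+1) n, T j ω))
        = if κ ω = k then (∑ i ∈ Icc 1 n, T i ω) * (∑ j ∈ Icc (k+1) n, T j ω) else 0 := by
      intro k _
      split_ifs <;> ring
    rw [Finset.sum_congr rfl h1, Finset.sum_ite_eq (Icc 1 (n-1)) (κ ω)
      (fun k => (∑ i ∈ Icc 1 n, T i ω) * (∑ j ∈ Icc (k+1) n, T j ω)),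
      if_pos (hκrange ω)]
  have hstep1 : ∫ ω, (∑ i ∈ Icc 1 n, T i ω) * (∑ i ∈ Icc (κ ω + 1) n, T i ω) ∂P
      = ∑ k ∈ Icc 1 (n-1), ∫ ω, (if κ ω = k then (1:ℝ) else 0) *
          ((∑ i ∈ Icc 1 n, T i ω) * (∑ j ∈ Icc (k+1) n, T j ω)) ∂P := by
    rw [hpt]
    exact integral_finset_sum _ fun k _ => htermint k
  -- independence step
  have hstep2 : ∀ k : ℕ, ∫ ω, (if κ ω = k then (1:ℝ) else 0) *
      ((∑ i ∈ Icc 1 n, T i ω) * (∑ j ∈ Icc (k+1) n, T j ω)) ∂P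
      = (P {ω | κ ω = k}).toReal *
        ∫ ω, (∑ i ∈ Icc 1 n, T i ω) * (∑ j ∈ Icc (k+1) n, T j ω) ∂P := by
    intro k
    have hφ : Measurable (fun m : ℕ => if m = k then (1:ℝ) else 0) := measurable_from_top
    have hg : Measurable (fun v : ℕ → ℝ =>
        (∑ i ∈ Icc 1 n, v i) * (∑ j ∈ Icc (k+1) n, v j)) :=
      (Finset.measurable_sum _ fun i _ => measurable_pi_apply i).mul
        (Finset.measurable_sum _ fun j _ => measurable_pi_apply j)
    have hIk := (hindep.comp hφ hg).integral_mul_eq_mul_integral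
      (hφ.comp hκmeas).aestronglyMeasurable
      (hg.comp (measurable_pi_lambda _ fun i => hTmeas i)).aestronglyMeasurable
    have hL : ∫ ω, (if κ ω = k then (1:ℝ) else 0) ∂P = (P {ω | κ ω = k}).toReal := by
      have : (fun ω => if κ ω = k then (1:ℝ) else 0)
          = Set.indicator {ω | κ ω = k} (fun _ => (1:ℝ)) := by
        funext ω
        by_cases h : κ ω = k <;> simp [h, Set.indicator_apply, Set.mem_setOf_eq]
      rw [this, integral_indicator_const (1:ℝ) (hsets k), smul_eq_mul, mul_one, measureReal_def]
    calc ∫ ω, (if κ ω = k then (1:ℝ) else 0) *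
          ((∑ i ∈ Icc 1 n, T i ω) * (∑ j ∈ Icc (k+1) n, T j ω)) ∂P
        = (∫ ω, (if κ ω = k then (1:ℝ) else 0) ∂P) *
          ∫ ω, (∑ i ∈ Icc 1 n, T i ω) * (∑ j ∈ Icc (k+1) n, T j ω) ∂P := hIk
      _ = _ := by rw [hL]
  -- putting things together
  rw [hstep1, Finset.sum_congr rfl fun k _ => hstep2 k]
  have hprob : ∀ k ∈ Icc 1 (n-1), (P {ω | κ ω = k}).toReal
      = (2 * ((n : ℝ) + 1) / ((n : ℝ) - 1)) * (1 / (((k : ℝ) + 1) * ((k : ℝ) + 2))) := by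
    intro k hk
    rw [hκdist k hk, ENNReal.toReal_ofReal]
    have h1 : (0:ℝ) < (n:ℝ) - 1 := by linarith
    positivity
  rw [Finset.sum_congr rfl fun k hk => by rw [hprob k hk, hUSval k]]
  -- now pure algebra
  set C : ℝ := 2 * ((n : ℝ) + 1) / ((n : ℝ) - 1) with hC
  have hcomm := Finset.sum_comm' (s := Icc 1 (n-1)) (t := fun k => Icc (k+1) n)
    (s' := fun j => Icc 1 (j-1)) (t' := Icc 2 n)
    (f := fun k j => C * ((1 / (((k : ℝ) + 1) * ((k : ℝ) + 2))) * (H1 / (j:ℝ) + 1/(j:ℝ)^2)))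
    (fun x y => by simp only [Finset.mem_Icc]; omega)
  have hswap : ∑ k ∈ Icc 1 (n-1), (C * (1 / (((k : ℝ) + 1) * ((k : ℝ) + 2)))) *
      (∑ j ∈ Icc (k+1) n, (H1 / (j:ℝ) + 1/(j:ℝ)^2))
      = ∑ j ∈ Icc 2 n, ∑ k ∈ Icc 1 (j-1),
          C * ((1 / (((k : ℝ) + 1) * ((k : ℝ) + 2))) * (H1 / (j:ℝ) + 1/(j:ℝ)^2)) := by
    rw [← hcomm]
    exact Finset.sum_congr rfl fun k _ => by
      rw [Finset.mul_sum]
      exact Finset.sum_congr rfl fun j _ => by ring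
  rw [hswap]
  have hinner : ∀ j ∈ Icc 2 n, ∑ k ∈ Icc 1 (j-1),
      C * ((1 / (((k : ℝ) + 1) * ((k : ℝ) + 2))) * (H1 / (j:ℝ) + 1/(j:ℝ)^2))
      = C * (((j:ℝ) - 1) / (2 * ((j:ℝ) + 1)) * (H1 / (j:ℝ) + 1/(j:ℝ)^2)) := by
    intro j hj
    have hj1 : 1 ≤ j := le_trans (by norm_num) (Finset.mem_Icc.mp hj).1
    rw [← Finset.mul_sum, ← Finset.sum_mul, sum_inv_mul_aux j hj1]
  rw [Finset.sum_congr rfl hinner, ← Finset.mul_sum,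
    sumj_aux H1 n (le_trans (by norm_num) hn), ← hH1, ← hH2]
  have h1 : ((n:ℝ) - 1) ≠ 0 := by linarith
  have h2 : ((n:ℝ) + 1) ≠ 0 := by positivity
  rw [hC]
  field_simp
  ring
end
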